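/- If γ : S^n → ℝ₊ is a convex integrand and δ : S^n → ℝ₊ is its dual convex integrand, then the dual convex integrand of δ is γ; equivalently, the double dual Wulff shape satisfies DDW_γ = W_γ. -/

import Mathlib

open scoped RealInnerProductSpace

noncomputable def sphereInv {n : ℕ} (x : EuclideanSpace ℝ (Fin (n+1))) :
    EuclideanSpace ℝ (Fin (n+1)) := -((‖x‖^2)⁻¹ • x)

noncomputable def graphSet {n : ℕ} (γ : EuclideanSpace ℝ (Fin (n+1)) → ℝ) :
    Set (EuclideanSpace ℝ (Fin (n+1))) :=
  (fun θ => γ θ • θ) '' Metric.sphere 0 1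

def ConvexIntegrand {n : ℕ} (γ : EuclideanSpace ℝ (Fin (n+1)) → ℝ) : Prop :=
  ContinuousOn γ (Metric.sphere 0 1) ∧
  (∀ θ ∈ Metric.sphere (0 : EuclideanSpace ℝ (Fin (n+1))) 1, 0 < γ θ) ∧
  sphereInv '' graphSet γ = frontier (convexHull ℝ (sphereInv '' graphSet γ))

noncomputable def Wulff {n : ℕ} (γ : EuclideanSpace ℝ (Fin (n+1)) → ℝ) :
    Set (EuclideanSpace ℝ (Fin (n+1))) :=
  ⋂ θ ∈ Metric.sphere (0 : EuclideanSpace ℝ (Fin (n+1))) 1,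
    {x | ⟪x, θ⟫ ≤ γ θ}

def IsDualIntegrand {n : ℕ} (γ δ : EuclideanSpace ℝ (Fin (n+1)) → ℝ) : Prop :=
  ConvexIntegrand δ ∧ sphereInv '' graphSet δ = frontier (Wulff γ)

section Aux

variable {n : ℕ}

lemma sphereInv_smul {θ : EuclideanSpace ℝ (Fin (n+1))} (hθ : ‖θ‖ = 1) {c : ℝ}
    (hc : 0 < c) : sphereInv (c • θ) = (-(c⁻¹)) • θ := by
  have hcc : (‖c • θ‖ ^ 2)⁻¹ * c = c⁻¹ := by
    rw [norm_smul, hθ, mul_one, Real.norm_eq_abs, abs_of_pos hc, sq]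
    field_simp
  unfold sphereInv
  rw [smul_smul, hcc]
  exact (neg_smul c⁻¹ θ).symm

lemma graphImage {γ : EuclideanSpace ℝ (Fin (n+1)) → ℝ}
    (hpos : ∀ θ ∈ Metric.sphere (0 : EuclideanSpace ℝ (Fin (n+1))) 1, 0 < γ θ) :
    sphereInv '' graphSet γ = (fun θ => (-(γ θ)⁻¹) • θ) '' Metric.sphere 0 1 := by
  unfold graphSet
  rw [Set.image_image]
  refine Set.image_congr fun θ hθ => ?_
  have hθ1 : ‖θ‖ = 1 := by simpa using hθ
  exact sphereInv_smul hθ1 (hpos θ hθ)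

lemma mem_Wulff_iff {γ : EuclideanSpace ℝ (Fin (n+1)) → ℝ}
    (hpos : ∀ θ ∈ Metric.sphere (0 : EuclideanSpace ℝ (Fin (n+1))) 1, 0 < γ θ)
    (x : EuclideanSpace ℝ (Fin (n+1))) :
    x ∈ Wulff γ ↔ ∀ y ∈ sphereInv '' graphSet γ, -1 ≤ ⟪x, y⟫ := by
  rw [graphImage hpos]
  simp only [Wulff, Set.mem_iInter, Set.mem_setOf_eq, Set.mem_image]
  constructor
  · rintro h y ⟨θ, hθ, rfl⟩
    have hg := hpos θ hθ
    have ht := h θ hθ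
    rw [real_inner_smul_right]
    have h1 : (γ θ)⁻¹ * ⟪x, θ⟫ ≤ (γ θ)⁻¹ * γ θ :=
      mul_le_mul_of_nonneg_left ht (inv_nonneg.2 hg.le)
    rw [inv_mul_cancel₀ hg.ne'] at h1
    nlinarith
  · intro h θ hθ
    have hg := hpos θ hθ
    have h0 := h _ ⟨θ, hθ, rfl⟩
    rw [real_inner_smul_right] at h0
    have h1 : (γ θ)⁻¹ * ⟪x, θ⟫ ≤ 1 := by nlinarith
    have h2 : γ θ * ((γ θ)⁻¹ * ⟪x, θ⟫) ≤ γ θ * 1 :=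
      mul_le_mul_of_nonneg_left h1 hg.le
    rw [mul_inv_cancel_left₀ hg.ne'] at h2
    linarith

lemma Wulff_eq_of_graph_eq {γ ξ : EuclideanSpace ℝ (Fin (n+1)) → ℝ}
    (hpγ : ∀ θ ∈ Metric.sphere (0 : EuclideanSpace ℝ (Fin (n+1))) 1, 0 < γ θ)
    (hpξ : ∀ θ ∈ Metric.sphere (0 : EuclideanSpace ℝ (Fin (n+1))) 1, 0 < ξ θ)
    (h : sphereInv '' graphSet ξ = sphereInv '' graphSet γ) : Wulff ξ = Wulff γ := by
  ext x
  rw [mem_Wulff_iff hpξ, mem_Wulff_iff hpγ, h]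

lemma isClosed_Wulff (γ : EuclideanSpace ℝ (Fin (n+1)) → ℝ) : IsClosed (Wulff γ) := by
  refine isClosed_biInter fun θ _ => ?_
  have he : {x : EuclideanSpace ℝ (Fin (n+1)) | ⟪x, θ⟫ ≤ γ θ}
      = {x | (innerSL ℝ θ) x ≤ γ θ} := by
    ext x
    simp only [Set.mem_setOf_eq, innerSL_apply_apply]
    rw [real_inner_comm]
  rw [he]
  exact isClosed_le (innerSL ℝ θ).continuous continuous_const

lemma convex_Wulff (γ : EuclideanSpace ℝ (Fin (n+1)) → ℝ) : Convex ℝ (Wulff γ) := by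
  refine convex_iInter fun θ => convex_iInter fun _ => ?_
  intro x hx y hy a b ha hb hab
  simp only [Set.mem_setOf_eq] at *
  rw [inner_add_left, real_inner_smul_left, real_inner_smul_left]
  have h1 : a * ⟪x, θ⟫ ≤ a * γ θ := mul_le_mul_of_nonneg_left hx ha
  have h2 : b * ⟪y, θ⟫ ≤ b * γ θ := mul_le_mul_of_nonneg_left hy hb
  have h3 : a * γ θ + b * γ θ = γ θ := by rw [← add_mul, hab, one_mul]
  linarith

lemma sphere_nonempty' : (Metric.sphere (0 : EuclideanSpace ℝ (Fin (n+1))) 1).Nonempty :=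
  NormedSpace.sphere_nonempty.2 zero_le_one

lemma Wulff_bounded {γ : EuclideanSpace ℝ (Fin (n+1)) → ℝ}
    (hcont : ContinuousOn γ (Metric.sphere 0 1)) :
    ∃ M : ℝ, ∀ x ∈ Wulff γ, ‖x‖ ≤ M := by
  obtain ⟨θm, hθm, hmax⟩ :=
    (isCompact_sphere (0 : EuclideanSpace ℝ (Fin (n+1))) 1).exists_isMaxOn sphere_nonempty' hcont
  refine ⟨max (γ θm) 0, fun x hx => ?_⟩
  rcases eq_or_ne x 0 with rfl | hx0
  · simp
  · have hnx : (0:ℝ) < ‖x‖ := norm_pos_iff.2 hx0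
    have hθ : ‖x‖⁻¹ • x ∈ Metric.sphere (0 : EuclideanSpace ℝ (Fin (n+1))) 1 := by
      rw [mem_sphere_zero_iff_norm, norm_smul, Real.norm_eq_abs, abs_of_pos (by positivity),
        inv_mul_cancel₀ hnx.ne']
    have hle := Set.mem_iInter.1 (Set.mem_iInter.1 hx (‖x‖⁻¹ • x)) hθ
    simp only [Set.mem_setOf_eq] at hle
    rw [real_inner_smul_right, real_inner_self_eq_norm_sq] at hle
    have h2 : ‖x‖⁻¹ * ‖x‖ ^ 2 = ‖x‖ := by
      rw [sq]
      field_simp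
    rw [h2] at hle
    exact le_trans hle (le_max_of_le_left (hmax hθ))

lemma exists_frontier_scale {K : Set (EuclideanSpace ℝ (Fin (n+1)))}
    (hK : IsClosed K) (hb : ∃ M : ℝ, ∀ x ∈ K, ‖x‖ ≤ M)
    {w : EuclideanSpace ℝ (Fin (n+1))} (hw : w ∈ K) (hw0 : w ≠ 0) :
    ∃ t : ℝ, 1 ≤ t ∧ t • w ∈ frontier K := by
  obtain ⟨M, hM⟩ := hb
  have hnw : (0:ℝ) < ‖w‖ := norm_pos_iff.2 hw0
  set T : Set ℝ := {t : ℝ | 0 ≤ t ∧ t • w ∈ K} with hT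
  have h1T : (1:ℝ) ∈ T := ⟨zero_le_one, by simpa using hw⟩
  have hTne : T.Nonempty := ⟨1, h1T⟩
  have hTbdd : BddAbove T := by
    refine ⟨M / ‖w‖, fun t ht => ?_⟩
    have h3 := hM _ ht.2
    rw [norm_smul, Real.norm_eq_abs, abs_of_nonneg ht.1] at h3
    rw [le_div_iff₀ hnw]
    exact h3
  have hTcl : IsClosed T := by
    have h1 : IsClosed {t : ℝ | t • w ∈ K} :=
      hK.preimage (continuous_id.smul continuous_const)
    have h2 : T = Set.Ici (0:ℝ) ∩ {t : ℝ | t • w ∈ K} := by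
      ext t
      simp [hT, Set.mem_Ici]
    rw [h2]
    exact isClosed_Ici.inter h1
  set t₀ := sSup T with ht₀
  have ht₀T : t₀ ∈ T := hTcl.csSup_mem hTne hTbdd
  have h1t : 1 ≤ t₀ := le_csSup hTbdd h1T
  refine ⟨t₀, h1t, ?_⟩
  rw [hK.frontier_eq]
  refine ⟨ht₀T.2, fun hint => ?_⟩
  obtain ⟨ε, hε, hball⟩ := Metric.isOpen_iff.1 isOpen_interior _ hint
  set s := ε / (2 * ‖w‖) with hs
  have hspos : 0 < s := by positivity
  have ht₁K : (t₀ + s) • w ∈ K := by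
    apply interior_subset
    apply hball
    rw [Metric.mem_ball, dist_eq_norm, ← sub_smul]
    have he : t₀ + s - t₀ = s := by ring
    rw [he, norm_smul, Real.norm_eq_abs, abs_of_pos hspos, hs]
    have : ε / (2 * ‖w‖) * ‖w‖ = ε / 2 := by field_simp
    rw [this]
    linarith
  have ht₁T : t₀ + s ∈ T := ⟨by linarith, ht₁K⟩
  have := le_csSup hTbdd ht₁T
  linarith

lemma zero_mem_hull {γ : EuclideanSpace ℝ (Fin (n+1)) → ℝ}
    (hpos : ∀ θ ∈ Metric.sphere (0 : EuclideanSpace ℝ (Fin (n+1))) 1, 0 < γ θ) :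
    (0 : EuclideanSpace ℝ (Fin (n+1))) ∈ convexHull ℝ (sphereInv '' graphSet γ) := by
  obtain ⟨θ, hθ⟩ := sphere_nonempty' (n := n)
  have hθn : -θ ∈ Metric.sphere (0 : EuclideanSpace ℝ (Fin (n+1))) 1 := by
    rw [mem_sphere_zero_iff_norm] at hθ ⊢
    simpa using hθ
  set a := γ θ with hadef
  set b := γ (-θ) with hbdef
  have ha := hpos θ hθ
  have hb := hpos _ hθn
  have hab : (0:ℝ) < a + b := by linarith
  have hp : (-(a⁻¹)) • θ ∈ sphereInv '' graphSet γ := by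
    rw [graphImage hpos]; exact ⟨θ, hθ, rfl⟩
  have hq : (-(b⁻¹)) • (-θ) ∈ sphereInv '' graphSet γ := by
    rw [graphImage hpos]; exact ⟨-θ, hθn, rfl⟩
  have hmem := (convex_convexHull ℝ (sphereInv '' graphSet γ))
    (subset_convexHull ℝ _ hp) (subset_convexHull ℝ _ hq)
    (le_of_lt (by positivity : (0:ℝ) < a / (a+b)))
    (le_of_lt (by positivity : (0:ℝ) < b / (a+b)))
    (by field_simp)
  have key : (a/(a+b)) • ((-(a⁻¹)) • θ) + (b/(a+b)) • ((-(b⁻¹)) • (-θ))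
      = (0 : EuclideanSpace ℝ (Fin (n+1))) := by
    rw [smul_smul, smul_smul, smul_neg, ← neg_smul, ← add_smul]
    have hc : a / (a + b) * -a⁻¹ + -(b / (a + b) * -b⁻¹) = 0 := by
      field_simp
      linarith [div_self (show a ≠ 0 from ha.ne'), div_self (show b ≠ 0 from hb.ne')]
    rw [hc, zero_smul]
  rwa [key] at hmem

lemma wulff_dual_eq_hull {γ δ : EuclideanSpace ℝ (Fin (n+1)) → ℝ}
    (hγ : ConvexIntegrand γ) (hδ : IsDualIntegrand γ δ) :
    Wulff δ = convexHull ℝ (sphereInv '' graphSet γ) := by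
  obtain ⟨hγc, hγp, hγf⟩ := hγ
  obtain ⟨⟨hδc, hδp, hδf⟩, hdual⟩ := hδ
  set S := sphereInv '' graphSet γ with hS
  set K := convexHull ℝ S with hKdef
  have hSK : S ⊆ K := subset_convexHull ℝ S
  have hKcl : IsClosed K := by
    rw [← frontier_subset_iff_isClosed]
    intro x hx
    rw [← hγf] at hx
    exact hSK hx
  have hSsub : S ⊆ Wulff δ := by
    intro y hy
    rw [mem_Wulff_iff hδp]
    intro z hz
    rw [hdual] at hz
    have hzW : z ∈ Wulff γ := (isClosed_Wulff γ).frontier_subset hz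
    rw [hS, graphImage hγp] at hy
    obtain ⟨θ, hθ, rfl⟩ := hy
    have hg := hγp θ hθ
    have hzθ : ⟪z, θ⟫ ≤ γ θ := by
      have := Set.mem_iInter.1 (Set.mem_iInter.1 hzW θ) hθ
      exact this
    rw [real_inner_smul_left, real_inner_comm]
    have h1 : (γ θ)⁻¹ * ⟪z, θ⟫ ≤ (γ θ)⁻¹ * γ θ :=
      mul_le_mul_of_nonneg_left hzθ (inv_nonneg.2 hg.le)
    rw [inv_mul_cancel₀ hg.ne'] at h1
    nlinarith
  have hKsub : K ⊆ Wulff δ := convexHull_min hSsub (convex_Wulff δ)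
  refine Set.Subset.antisymm ?_ hKsub
  intro x hx
  by_contra hxK
  obtain ⟨f, u, hfa, hfx⟩ :=
    geometric_hahn_banach_closed_point (convex_convexHull ℝ S) hKcl hxK
  have hu : 0 < u := by
    have h0 := hfa 0 (zero_mem_hull hγp)
    simpa using h0
  set v := (InnerProductSpace.toDual ℝ (EuclideanSpace ℝ (Fin (n+1)))).symm f with hv
  have hfv : ∀ y, ⟪v, y⟫ = f y := fun y => InnerProductSpace.toDual_symm_apply
  set w := (-(u⁻¹)) • v with hw
  have hwW : w ∈ Wulff γ := by
    simp only [Wulff, Set.mem_iInter, Set.mem_setOf_eq]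
    intro θ hθ
    have hg := hγp θ hθ
    have hmem : (-(γ θ)⁻¹) • θ ∈ K := hSK (by rw [hS, graphImage hγp]; exact ⟨θ, hθ, rfl⟩)
    have h2 := hfa _ hmem
    rw [map_smul, smul_eq_mul] at h2
    rw [hw, real_inner_smul_left, hfv θ]
    have h3 : γ θ * (-(γ θ)⁻¹ * f θ) < γ θ * u := mul_lt_mul_of_pos_left h2 hg
    have h4 : γ θ * (-(γ θ)⁻¹ * f θ) = -f θ := by field_simp
    rw [h4] at h3
    have h5 : u⁻¹ * (-f θ) < u⁻¹ * (γ θ * u) := mul_lt_mul_of_pos_left h3 (inv_pos.2 hu)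
    have h6 : u⁻¹ * (γ θ * u) = γ θ := by field_simp
    rw [h6] at h5
    nlinarith
  have hxw_ge : -1 ≤ ⟪x, w⟫ := by
    rcases eq_or_ne w 0 with h0 | h0
    · rw [h0, inner_zero_right]; norm_num
    · obtain ⟨t, ht1, htf⟩ :=
        exists_frontier_scale (isClosed_Wulff γ) (Wulff_bounded hγc) hwW h0
      have htw : t • w ∈ sphereInv '' graphSet δ := by rw [hdual]; exact htf
      have h1 := (mem_Wulff_iff hδp x).1 hx _ htw
      rw [real_inner_smul_right] at h1
      rcases le_or_gt 0 (⟪x, w⟫) with hs | hs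
      · linarith
      · have h2 : t * ⟪x, w⟫ ≤ 1 * ⟪x, w⟫ := mul_le_mul_of_nonpos_right ht1 hs.le
        rw [one_mul] at h2
        linarith
  have hxw_lt : ⟪x, w⟫ < -1 := by
    rw [hw, real_inner_smul_right, real_inner_comm, hfv x]
    have h5 : u⁻¹ * u < u⁻¹ * f x := mul_lt_mul_of_pos_left hfx (inv_pos.2 hu)
    rw [inv_mul_cancel₀ hu.ne'] at h5
    rw [neg_mul]
    linarith
  linarith

end Aux

/-- Duality of convex integrands is involutive: the dual of the dual of `γ` is `γ`,
and correspondingly `DDW_γ = W_γ`. -/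
theorem stmt_10 {n : ℕ} (γ δ : EuclideanSpace ℝ (Fin (n+1)) → ℝ)
    (hγ : ConvexIntegrand γ) (hδ : IsDualIntegrand γ δ) :
    IsDualIntegrand δ γ ∧
      ∀ ξ : EuclideanSpace ℝ (Fin (n+1)) → ℝ, IsDualIntegrand δ ξ → Wulff ξ = Wulff γ := by
  have hW : Wulff δ = convexHull ℝ (sphereInv '' graphSet γ) := wulff_dual_eq_hull hγ hδ
  have hfront : frontier (Wulff δ) = sphereInv '' graphSet γ := by
    rw [hW]
    exact hγ.2.2.symm
  refine ⟨⟨hγ, hfront.symm⟩, ?_⟩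
  intro ξ hξ
  have hg : sphereInv '' graphSet ξ = sphereInv '' graphSet γ := by rw [hξ.2, hfront]
  exact Wulff_eq_of_graph_eq hγ.2.1 hξ.1.2.1 hg
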